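/- Let g:[0,l]→ℂ be a C¹ arc-length parameterization of a Jordan curve (so |g'(s)|=1 for all s), and let ω be a modulus of continuity for g' (i.e., |g'(s)−g'(t)| ≤ ω(|s−t|)). Define K(s,t) = Re[conj(g(t)−g(s)) · i g'(s)]. Then |K(s,t)| ≤ ∫₀^{|s−t|} ω(τ) dτ. -/

import Mathlib

open Set Complex MeasureTheory intervalIntegral
open scoped Interval

theorem stmt_2 (l : ℝ) (hl : 0 < l) (g : ℝ → ℂ) (g' : ℝ → ℂ) (ω : ℝ → ℝ)
    (hderiv : ∀ s ∈ Icc 0 l, HasDerivAt g (g' s) s)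
    (hunit : ∀ s ∈ Icc 0 l, ‖g' s‖ = 1)
    (hωmono : MonotoneOn ω (Icc 0 l))
    (hωnonneg : ∀ x ∈ Icc 0 l, 0 ≤ ω x)
    (hmod : ∀ s ∈ Icc 0 l, ∀ t ∈ Icc 0 l, ‖g' s - g' t‖ ≤ ω |s - t|) :
    ∀ s ∈ Icc 0 l, ∀ t ∈ Icc 0 l,
      |((starRingEnd ℂ) (g t - g s) * (Complex.I * g' s)).re|
        ≤ ∫ τ in (0:ℝ)..|s - t|, ω τ := by
  intro s hs t ht
  have hsub : uIcc s t ⊆ Icc 0 l := uIcc_subset_Icc hs ht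
  have hsub' : Ι s t ⊆ Icc 0 l := fun x hx => hsub (Ioc_subset_Icc_self hx)
  set c : ℂ := Complex.I * g' s with hc
  -- the continuous linear map z ↦ (conj z * c).re
  set L : ℂ →L[ℝ] ℝ :=
    Complex.reCLM.comp (((ContinuousLinearMap.mul ℝ ℂ).flip c).comp
      Complex.conjCLE.toContinuousLinearMap) with hL
  have hLapp : ∀ z : ℂ, L z = ((starRingEnd ℂ) z * c).re := fun z => rfl
  -- integrability of g'
  have hgmeas : AEStronglyMeasurable g' (volume.restrict (Ι s t)) := by
    refine (measurable_deriv g).aestronglyMeasurable.congr ?_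
    refine (ae_restrict_iff' measurableSet_uIoc).2 (Filter.Eventually.of_forall ?_)
    intro x hx
    exact ((hderiv x (hsub' hx)).deriv)
  have hgint : IntervalIntegrable g' volume s t := by
    rw [intervalIntegrable_iff]
    refine Integrable.mono' (g := fun _ => (1:ℝ)) (integrableOn_const ?_) hgmeas ?_
    · exact measure_Ioc_lt_top.ne
    · refine (ae_restrict_iff' measurableSet_uIoc).2 (Filter.Eventually.of_forall ?_)
      intro x hx
      rw [hunit x (hsub' hx)]
  -- FTC
  have hftc : ∫ τ in s..t, g' τ = g t - g s :=
    intervalIntegral.integral_eq_sub_of_hasDerivAt (fun x hx => hderiv x (hsub hx)) hgint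
  have hK : ((starRingEnd ℂ) (g t - g s) * c).re = ∫ τ in s..t, L (g' τ) := by
    rw [L.intervalIntegral_comp_comm hgint, hftc, hLapp]
  -- pointwise rewriting : L (g' τ) = L (g' τ - g' s)
  have hzero : L (g' s) = 0 := by
    rw [hLapp, hc]
    simp [Complex.mul_re, Complex.mul_im]
    ring
  have hpt : ∀ τ, L (g' τ) = L (g' τ - g' s) := by
    intro τ; rw [map_sub, hzero, sub_zero]
  have hcnorm : ‖c‖ = 1 := by
    rw [hc, norm_mul, Complex.norm_I, one_mul, hunit s hs]
  -- pointwise bound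
  have hbd : ∀ τ ∈ Ι s t, ‖L (g' τ)‖ ≤ ω |τ - s| := by
    intro τ hτ
    rw [hpt, hLapp]
    calc ‖((starRingEnd ℂ) (g' τ - g' s) * c).re‖
        ≤ ‖(starRingEnd ℂ) (g' τ - g' s) * c‖ := Complex.abs_re_le_norm _
      _ = ‖g' τ - g' s‖ * ‖c‖ := by rw [norm_mul, RCLike.norm_conj]
      _ ≤ ω |τ - s| := by rw [hcnorm, mul_one]; exact hmod τ (hsub' hτ) s hs
  rw [hK]
  rcases le_total s t with hst | hst
  · have habs : |s - t| = t - s := by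
      rw [abs_sub_comm]; exact _root_.abs_of_nonneg (sub_nonneg.2 hst)
    have hmem : ∀ a ∈ Icc s t, a - s ∈ Icc 0 l := by
      intro a ha
      have h1 := hs.1; have h2 := ht.2
      exact ⟨by linarith [ha.1], by linarith [ha.2]⟩
    have hbint : IntervalIntegrable (fun τ => ω (τ - s)) volume s t := by
      apply MonotoneOn.intervalIntegrable
      rw [uIcc_of_le hst]
      intro a ha b hb hab
      exact hωmono (hmem a ha) (hmem b hb) (by linarith)
    have h1 : ‖∫ τ in s..t, L (g' τ)‖ ≤ |∫ τ in s..t, ω (τ - s)| := by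
      refine intervalIntegral.norm_integral_le_abs_of_norm_le ?_ hbint
      refine (ae_restrict_iff' measurableSet_uIoc).2 (Filter.Eventually.of_forall ?_)
      intro x hx
      have hx' : x ∈ Ioc s t := by rwa [uIoc_of_le hst] at hx
      have := hbd x hx
      rwa [_root_.abs_of_nonneg (by linarith [hx'.1] : (0:ℝ) ≤ x - s)] at this
    have h2 : (∫ τ in s..t, ω (τ - s)) = ∫ τ in (0:ℝ)..(t - s), ω τ := by
      rw [intervalIntegral.integral_comp_sub_right (fun τ => ω τ) s, sub_self]
    have h3 : 0 ≤ ∫ τ in (0:ℝ)..(t - s), ω τ := by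
      apply intervalIntegral.integral_nonneg (by linarith)
      intro u hu
      exact hωnonneg u ⟨hu.1, by linarith [hu.2, ht.2, hs.1]⟩
    rw [habs, ← Real.norm_eq_abs]
    calc ‖∫ τ in s..t, L (g' τ)‖ ≤ |∫ τ in s..t, ω (τ - s)| := h1
      _ = ∫ τ in (0:ℝ)..(t - s), ω τ := by rw [h2, _root_.abs_of_nonneg h3]
  · have habs : |s - t| = s - t := _root_.abs_of_nonneg (sub_nonneg.2 hst)
    have hmem : ∀ a ∈ Icc t s, s - a ∈ Icc 0 l := by
      intro a ha
      have h1 := ht.1; have h2 := hs.2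
      exact ⟨by linarith [ha.2], by linarith [ha.1]⟩
    have hbint : IntervalIntegrable (fun τ => ω (s - τ)) volume s t := by
      apply AntitoneOn.intervalIntegrable
      rw [uIcc_of_ge hst]
      intro a ha b hb hab
      exact hωmono (hmem b hb) (hmem a ha) (by linarith)
    have h1 : ‖∫ τ in s..t, L (g' τ)‖ ≤ |∫ τ in s..t, ω (s - τ)| := by
      refine intervalIntegral.norm_integral_le_abs_of_norm_le ?_ hbint
      refine (ae_restrict_iff' measurableSet_uIoc).2 (Filter.Eventually.of_forall ?_)
      intro x hx
      have hx' : x ∈ Ioc t s := by rwa [uIoc_of_ge hst] at hx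
      have := hbd x hx
      rwa [abs_sub_comm, _root_.abs_of_nonneg (by linarith [hx'.2] : (0:ℝ) ≤ s - x)] at this
    have h2 : (∫ τ in s..t, ω (s - τ)) = ∫ τ in (s - t)..(0:ℝ), ω τ := by
      rw [intervalIntegral.integral_comp_sub_left (fun τ => ω τ) s, sub_self]
    have h3 : 0 ≤ ∫ τ in (0:ℝ)..(s - t), ω τ := by
      apply intervalIntegral.integral_nonneg (by linarith)
      intro u hu
      exact hωnonneg u ⟨hu.1, by linarith [hu.2, hs.2, ht.1]⟩
    rw [habs, ← Real.norm_eq_abs]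
    calc ‖∫ τ in s..t, L (g' τ)‖ ≤ |∫ τ in s..t, ω (s - τ)| := h1
      _ = |∫ τ in (0:ℝ)..(s - t), ω τ| := by
          rw [h2, intervalIntegral.integral_symm, abs_neg]
      _ = ∫ τ in (0:ℝ)..(s - t), ω τ := _root_.abs_of_nonneg h3
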